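/- If F_Z is a distribution function whose excess distribution over the threshold u equals the Generalized Pareto distribution G_{ξ,β} with ξ > 0, i.e. F_u(x) = (F_Z(x+u) − F_Z(u))/(1 − F_Z(u)) = 1 − (1 + ξx/β)^{−1/ξ} for x ≥ 0, then for all α ≥ F_Z(u): (i) F_Z^{-1}(α) = u + (β/ξ)(((1−α)/(1−F_Z(u)))^{−ξ} − 1); and (ii) if moreover ξ < 1, (1/(1−α)) ∫_α^1 F_Z^{-1}(y) dy = F_Z^{-1}(α)/(1−ξ) + (β − ξu)/(1−ξ). -/

import Mathlib

open MeasureTheory Set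

/-- Left-continuous quantile function (generalized inverse) of a distribution function. -/
noncomputable def quantileFun (F : ℝ → ℝ) (α : ℝ) : ℝ :=
  sInf {x : ℝ | α ≤ F x}

/-- If the excess distribution of `F` over the threshold `u` is the Generalized Pareto
distribution `G_{ξ,β}` with `ξ > 0`, then for `α ≥ F(u)`:
(i) `F^{-1}(α) = u + (β/ξ)(((1−α)/(1−F(u)))^{−ξ} − 1)`, and
(ii) if `ξ < 1`, `(1/(1−α)) ∫_α^1 F^{-1}(y) dy = F^{-1}(α)/(1−ξ) + (β − ξu)/(1−ξ)`. -/
theorem gpd_quantile_and_avar (F : ℝ → ℝ) (hcont : Continuous F) (hmono : StrictMono F)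
    (hrange : ∀ x, F x ∈ Set.Icc (0 : ℝ) 1)
    (u β ξ : ℝ) (hβ : 0 < β) (hξ : 0 < ξ) (hu : F u < 1)
    (hGPD : ∀ x : ℝ, 0 ≤ x →
      (F (x + u) - F u) / (1 - F u) = 1 - (1 + ξ * x / β) ^ (-1 / ξ))
    (α : ℝ) (hα₁ : F u ≤ α) (hα₂ : α < 1) :
    quantileFun F α = u + (β / ξ) * (((1 - α) / (1 - F u)) ^ (-ξ) - 1) ∧
    (ξ < 1 →
      (1 - α)⁻¹ * ∫ y in α..(1 : ℝ), quantileFun F y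
        = quantileFun F α / (1 - ξ) + (β - ξ * u) / (1 - ξ)) := by
  have hc : 0 < 1 - F u := by linarith
  -- quantile formula for every level γ ∈ [F u, 1)
  have hq : ∀ γ : ℝ, F u ≤ γ → γ < 1 →
      quantileFun F γ = u + (β / ξ) * (((1 - γ) / (1 - F u)) ^ (-ξ) - 1) := by
    intro γ hγ1 hγ2
    set r : ℝ := (1 - γ) / (1 - F u) with hr_def
    have hr0 : 0 < r := div_pos (by linarith) hc
    have hr1 : r ≤ 1 := (div_le_one hc).2 (by linarith)
    have h1r : (1 : ℝ) ≤ r ^ (-ξ) :=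
      Real.one_le_rpow_of_pos_of_le_one_of_nonpos hr0 hr1 (by linarith)
    set x : ℝ := (β / ξ) * (r ^ (-ξ) - 1) with hx_def
    have hx0 : 0 ≤ x := mul_nonneg (div_pos hβ hξ).le (by linarith)
    have hFx : F (x + u) = γ := by
      have hg := hGPD x hx0
      have h1x : 1 + ξ * x / β = r ^ (-ξ) := by
        rw [hx_def]; field_simp; ring
      rw [h1x] at hg
      have hpow : (r ^ (-ξ)) ^ (-1 / ξ) = r := by
        rw [← Real.rpow_mul hr0.le]
        have : (-ξ) * (-1 / ξ) = 1 := by field_simp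
        rw [this, Real.rpow_one]
      rw [hpow] at hg
      have hcne : (1 - F u) ≠ 0 := ne_of_gt hc
      rw [div_eq_iff hcne] at hg
      have : r * (1 - F u) = 1 - γ := by
        rw [hr_def]; field_simp
      nlinarith [hg, this]
    have hset : {z : ℝ | γ ≤ F z} = Ici (x + u) := by
      ext z
      simp only [mem_setOf_eq, mem_Ici, ← hFx, hmono.le_iff_le]
    rw [quantileFun, hset, csInf_Ici, hx_def]
    ring
  refine ⟨hq α hα₁ hα₂, ?_⟩
  intro hξ1
  have hξ1' : (0:ℝ) < 1 - ξ := by linarith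
  set A : ℝ := u - β / ξ with hA_def
  set B : ℝ := (β / ξ) * (1 - F u) ^ ξ with hB_def
  -- rewrite quantile as A + B * (1-y)^(-ξ)
  have hqg : ∀ y : ℝ, F u ≤ y → y < 1 →
      quantileFun F y = A + B * (1 - y) ^ (-ξ) := by
    intro y hy1 hy2
    rw [hq y hy1 hy2]
    have h1 : ((1 - y) / (1 - F u)) ^ (-ξ) = (1 - y) ^ (-ξ) * (1 - F u) ^ ξ := by
      rw [Real.div_rpow (by linarith) hc.le, Real.rpow_neg hc.le,
        div_eq_mul_inv, inv_inv]
    rw [h1, hA_def, hB_def]; ring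
  -- replace the integrand a.e.
  have hIeq : (∫ y in α..(1:ℝ), quantileFun F y)
      = ∫ y in α..(1:ℝ), (A + B * (1 - y) ^ (-ξ)) := by
    apply intervalIntegral.integral_congr_ae
    have hne : ∀ᵐ y : ℝ, y ≠ (1:ℝ) := by
      rw [ae_iff]
      have : {y : ℝ | ¬ y ≠ 1} = {(1:ℝ)} := by ext y; simp
      rw [this]; exact measure_singleton 1
    filter_upwards [hne] with y hy hmem
    rw [Set.uIoc_of_le hα₂.le] at hmem
    have hy2 : y < 1 := lt_of_le_of_ne hmem.2 hy
    exact hqg y (le_trans hα₁ hmem.1.le) hy2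
  rw [hIeq]
  -- compute the integral by substitution y ↦ 1 - x
  have hsub : (∫ y in α..(1:ℝ), (A + B * (1 - y) ^ (-ξ)))
      = ∫ x in (0:ℝ)..(1 - α), (A + B * x ^ (-ξ)) := by
    have := intervalIntegral.integral_comp_sub_left
      (fun x : ℝ => A + B * x ^ (-ξ)) 1 (a := α) (b := 1)
    simpa using this
  have hint : IntervalIntegrable (fun x : ℝ => B * x ^ (-ξ)) volume 0 (1 - α) :=
    (intervalIntegral.intervalIntegrable_rpow' (by linarith)).const_mul B
  have hval : (∫ x in (0:ℝ)..(1 - α), (A + B * x ^ (-ξ)))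
      = (1 - α) * A + B * ((1 - α) ^ (1 - ξ) / (1 - ξ)) := by
    rw [intervalIntegral.integral_add (intervalIntegrable_const) hint,
      intervalIntegral.integral_const, intervalIntegral.integral_const_mul,
      integral_rpow (Or.inl (by linarith))]
    rw [Real.zero_rpow (by linarith : (-ξ) + 1 ≠ 0)]
    have : (-ξ) + 1 = 1 - ξ := by ring
    rw [this]
    simp only [smul_eq_mul, sub_zero]
  rw [hsub, hval, hqg α hα₁ hα₂]
  have hαpos : (0:ℝ) < 1 - α := by linarith
  have hpow : (1 - α) ^ (1 - ξ) = (1 - α) * (1 - α) ^ (-ξ) := by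
    have : (1:ℝ) - ξ = 1 + (-ξ) := by ring
    rw [this, Real.rpow_add hαpos, Real.rpow_one]
  rw [hpow, hA_def, hB_def]
  field_simp
  ring
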